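/- (Theorem 1.) Fix ω > 0, γ > 0, β > 0 and p ∈ [0, 1/2], with p_e = 1/(e^{2ωβ} + 1) and λ = γ/(2p_e − 1). Define δ(t) = 1 − e^{λt} + 2t(p_e − p)(λ²/γ) e^{λt} and α(t) = 1 − a e^{2λt} + b e^{λt}, where a = (p_e − p)²/(p_e(1 − p_e)) and b = (p_e − p)(2p_e − 1)/(p_e(1 − p_e)). Then there exists a finite time t > 0 with δ(t)² > α(t) if and only if p < p_e. Equivalently, the transient quantum Fisher information of the Markovian qubit probe exceeds its steady-state value at some finite time if and only if the initial probe is colder than the bath thermal state (β_i > β). -/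

import Mathlib

set_option maxHeartbeats 1000000


/-- **Theorem 1.** For a qubit probe with initial excited-state
population `p ∈ [0,1/2]` evolving under Markovian GKSL dynamics in a bath with
thermal population `p_e = 1/(e^{2ωβ}+1)`, there exists a finite time `t > 0` at
which the transient quantum Fisher information exceeds its steady-state value —
i.e. `δ(t)² > α(t)` — if and only if the probe is initially colder than the bath
thermal state (`p < p_e`, equivalently `β_i > β`). -/
theorem cold_probe_stmt_16 (ω γ β p : ℝ) (hω : 0 < ω) (hγ : 0 < γ) (hβ : 0 < β)
    (hp : p ∈ Set.Icc (0 : ℝ) (1 / 2))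
    (pe lam a b : ℝ)
    (hpe : pe = 1 / (Real.exp (2 * ω * β) + 1))
    (hlam : lam = γ / (2 * pe - 1))
    (ha : a = (pe - p) ^ 2 / (pe * (1 - pe)))
    (hb : b = (pe - p) * (2 * pe - 1) / (pe * (1 - pe))) :
    (∃ t : ℝ, 0 < t ∧
        (1 - Real.exp (lam * t) + 2 * t * (pe - p) * (lam ^ 2 / γ) * Real.exp (lam * t)) ^ 2 >
          1 - a * Real.exp (2 * lam * t) + b * Real.exp (lam * t)) ↔
      p < pe := by
  obtain ⟨hp0, hp2⟩ := hp
  have hE : 1 < Real.exp (2 * ω * β) := by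
    have h2 : 0 < 2 * ω * β := by positivity
    nlinarith [Real.add_one_le_exp (2 * ω * β)]
  have hpe0 : 0 < pe := by rw [hpe]; positivity
  have hpeh : pe < 1 / 2 := by
    rw [hpe, div_lt_div_iff₀ (by linarith) (by norm_num)]
    linarith
  have h12 : 0 < 1 - 2 * pe := by linarith
  have h12ne : (1 - 2 * pe) ≠ 0 := ne_of_gt h12
  have hdne : (2 * pe - 1) ≠ 0 := by intro h; linarith
  have hγne : γ ≠ 0 := ne_of_gt hγ
  have hlamneg : lam < 0 := by
    rw [hlam]; exact div_neg_of_pos_of_neg hγ (by linarith)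
  have hlamne : lam ≠ 0 := ne_of_lt hlamneg
  have hpe1 : 0 < pe * (1 - pe) := by nlinarith
  have ha0 : 0 ≤ a := by
    rw [ha]; positivity
  have hlg : lam / γ = 1 / (2 * pe - 1) := by
    rw [hlam]; field_simp
  constructor
  · -- forward: existence implies p < pe
    rintro ⟨t, ht0, hgt⟩
    by_contra hnp
    push_neg at hnp  -- pe ≤ p
    set k := 2 * (p - pe) / (1 - 2 * pe) with hk_def
    have hk0 : 0 ≤ k := by
      apply div_nonneg (by linarith) (le_of_lt h12)
    have hk1 : k ≤ 1 := by
      rw [hk_def, div_le_one h12]; linarith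
    have h2t : 2 * t * (pe - p) * (lam ^ 2 / γ) = k * (lam * t) := by
      calc 2 * t * (pe - p) * (lam ^ 2 / γ)
          = 2 * (pe - p) * (lam * t) * (lam / γ) := by ring
        _ = 2 * (pe - p) * (lam * t) * (1 / (2 * pe - 1)) := by rw [hlg]
        _ = k * (lam * t) := by rw [hk_def]; field_simp; ring
    have hx2 : Real.exp (2 * lam * t) = Real.exp (lam * t) * Real.exp (lam * t) := by
      rw [← Real.exp_add]; ring_nf
    rw [h2t, hx2] at hgt
    set x := Real.exp (lam * t) with hx_def
    have hx0 : 0 < x := Real.exp_pos _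
    have hvt : lam * t < 0 := mul_neg_of_neg_of_pos hlamneg ht0
    have hx1 : x < 1 := by
      rw [hx_def]; exact Real.exp_lt_one_iff.mpr hvt
    -- key bound : (-(lam*t)) * x ≤ 1 - x
    have hinv : x * Real.exp (-(lam * t)) = 1 := by
      rw [hx_def, ← Real.exp_add]; simp
    have hkey : (-(lam * t)) * x ≤ 1 - x := by
      nlinarith [mul_le_mul_of_nonneg_left (Real.add_one_le_exp (-(lam * t))) hx0.le, hinv]
    -- 0 ≤ δ ≤ 1 - x
    have hδu : 1 - x + k * (lam * t) * x ≤ 1 - x := by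
      nlinarith [mul_nonneg hk0 (mul_nonneg (neg_nonneg.mpr hvt.le) hx0.le)]
    have hδl : 0 ≤ 1 - x + k * (lam * t) * x := by
      have h1 : k * ((-(lam * t)) * x) ≤ 1 * ((-(lam * t)) * x) := by
        apply mul_le_mul_of_nonneg_right hk1
        exact mul_nonneg (neg_nonneg.mpr hvt.le) hx0.le
      nlinarith
    have hsq : (1 - x + k * (lam * t) * x) ^ 2 ≤ (1 - x) ^ 2 := by
      exact pow_le_pow_left₀ hδl hδu 2
    -- 1 + b - a > 0
    have h1ba : (1 + b - a) * (pe * (1 - pe)) = p * (1 - p) := by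
      rw [ha, hb, sub_mul, add_mul, div_mul_cancel₀ _ hpe1.ne', div_mul_cancel₀ _ hpe1.ne']; ring
    have hpp : 0 < p * (1 - p) := by
      have : 0 < p := lt_of_lt_of_le hpe0 hnp
      nlinarith
    have hba : 0 < 1 + b - a := by nlinarith
    -- α > (1-x)^2
    have hco : (1 + a) * x < 2 + b := by
      have h1 : (1 + a) * x < (1 + a) * 1 := by
        apply mul_lt_mul_of_pos_left hx1 (by linarith)
      linarith
    have hαgt : (1 - x) ^ 2 < 1 - a * (x * x) + b * x := by
      nlinarith [mul_pos hx0 (show (0:ℝ) < 2 + b - (1 + a) * x by linarith)]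
    linarith [hsq, hgt, hαgt]
  · -- reverse: p < pe gives explicit time
    intro hplt
    set s := 2 * (pe - p) / (1 - 2 * pe) with hs_def
    have hs0 : 0 < s := by
      rw [hs_def]; apply div_pos (by linarith) h12
    set u := (3 + b ^ 2) / (2 * s) with hu_def
    have hu0 : 0 < u := by
      rw [hu_def]; apply div_pos (by positivity) (by linarith)
    refine ⟨u / (-lam), div_pos hu0 (by linarith), ?_⟩
    have hvt : lam * (u / (-lam)) = -u := by
      field_simp
    have h2t : 2 * (u / (-lam)) * (pe - p) * (lam ^ 2 / γ) = s * u := by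
      calc 2 * (u / (-lam)) * (pe - p) * (lam ^ 2 / γ)
          = 2 * (pe - p) * (lam * (u / (-lam))) * (lam / γ) := by ring
        _ = 2 * (pe - p) * (-u) * (1 / (2 * pe - 1)) := by rw [hvt, hlg]
        _ = s * u := by rw [hs_def]; field_simp; ring
    have hx2 : Real.exp (2 * lam * (u / (-lam)))
        = Real.exp (lam * (u / (-lam))) * Real.exp (lam * (u / (-lam))) := by
      rw [← Real.exp_add]; ring_nf
    rw [h2t, hx2]
    set x := Real.exp (lam * (u / (-lam))) with hx_def
    have hx0 : 0 < x := Real.exp_pos _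
    have hsu : s * u = (3 + b ^ 2) / 2 := by
      rw [hu_def]; field_simp
    rw [hsu]
    nlinarith [mul_pos hx0 (show (0:ℝ) < b ^ 2 - b + 1 by nlinarith [sq_nonneg (2 * b - 1)]),
      mul_nonneg (mul_nonneg ha0 hx0.le) hx0.le,
      mul_nonneg (mul_nonneg (sq_nonneg (1 + b ^ 2)) hx0.le) hx0.le]
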